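/- Let N_m be the cardinal B-spline of order m ≥ 1. Then N_m satisfies the two-scale relation N_m(x) = 2^{-(m-1)} · ∑_{i=0}^{m} C(m, i) · N_m(2x - i) for all real x. -/

import Mathlib

open MeasureTheory

/-- The cardinal B-spline of order `m` (with `N 0 = 0` by convention). -/
noncomputable def cardinalBSpline : ℕ → ℝ → ℝ
  | 0 => fun _ => 0
  | 1 => (Set.Ico (0 : ℝ) 1).indicator 1
  | (m + 2) => fun x => ∫ y in (0 : ℝ)..1, cardinalBSpline (m + 1) (x - y)

lemma bspline_succ (m : ℕ) (hm : 1 ≤ m) (x : ℝ) :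
    cardinalBSpline (m + 1) x = ∫ y in (x - 1)..x, cardinalBSpline m y := by
  obtain ⟨k, rfl⟩ := Nat.exists_eq_add_of_le' hm
  show (∫ y in (0:ℝ)..1, cardinalBSpline (k + 1) (x - y)) = _
  rw [intervalIntegral.integral_comp_sub_left]
  norm_num

lemma bspline_integrable (m : ℕ) :
    ∀ a b : ℝ, IntervalIntegrable (cardinalBSpline m) volume a b := by
  induction m with
  | zero =>
    intro a b
    show IntervalIntegrable (fun _ => (0:ℝ)) volume a b
    exact intervalIntegrable_const
  | succ n ih =>
    match n, ih with
    | 0, _ =>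
      intro a b
      refine MeasureTheory.Integrable.intervalIntegrable ?_
      show Integrable ((Set.Ico (0:ℝ) 1).indicator 1) volume
      rw [integrable_indicator_iff measurableSet_Ico]
      exact integrableOn_const (by simp) (by simp)
    | (k+1), ih =>
      have hc : Continuous (cardinalBSpline (k + 2)) := by
        have heq : cardinalBSpline (k + 2) = fun x =>
            (∫ t in (0:ℝ)..x, cardinalBSpline (k+1) t)
              - ∫ t in (0:ℝ)..(x - 1), cardinalBSpline (k+1) t := by
          funext x
          rw [bspline_succ (k+1) (by omega) x]
          rw [← intervalIntegral.integral_interval_sub_left (ih 0 x) (ih 0 (x-1))]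
        rw [heq]
        exact ((intervalIntegral.continuous_primitive ih 0)).sub
          ((intervalIntegral.continuous_primitive ih 0).comp (continuous_id.sub continuous_const))
      exact fun a b => hc.intervalIntegrable a b

lemma bspline_half (m : ℕ) (hm : 1 ≤ m) (c : ℝ) :
    (∫ y in (0:ℝ)..1, cardinalBSpline m (c - 2 * y)) =
      (1/2) * (cardinalBSpline (m+1) c + cardinalBSpline (m+1) (c - 1)) := by
  have h1 : (∫ y in (0:ℝ)..1, cardinalBSpline m (c - 2 * y))
      = (2:ℝ)⁻¹ • ∫ u in (0:ℝ)..2, cardinalBSpline m (c - u) := by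
    have := intervalIntegral.integral_comp_mul_left
      (a := (0:ℝ)) (b := 1) (fun u => cardinalBSpline m (c - u)) (c := (2:ℝ)) two_ne_zero
    simpa using this
  rw [h1, intervalIntegral.integral_comp_sub_left]
  have h2 : (∫ u in (c - 2)..(c - 0), cardinalBSpline m u)
      = (∫ u in (c-2)..(c-1), cardinalBSpline m u) + ∫ u in (c-1)..c, cardinalBSpline m u := by
    rw [intervalIntegral.integral_add_adjacent_intervals (bspline_integrable m _ _)
      (bspline_integrable m _ _)]
    norm_num
  rw [sub_zero] at h2 ⊢
  rw [h2, bspline_succ m hm c, bspline_succ m hm (c - 1)]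
  have : c - 1 - 1 = c - 2 := by ring
  rw [this]
  ring_nf

lemma indicator_pos {a : ℝ} (h1 : 0 ≤ a) (h2 : a < 1) :
    (Set.Ico (0:ℝ) 1).indicator 1 a = (1:ℝ) := by
  exact Set.indicator_of_mem (Set.mem_Ico.mpr ⟨h1, h2⟩) 1

lemma indicator_neg {a : ℝ} (h : a < 0 ∨ 1 ≤ a) :
    (Set.Ico (0:ℝ) 1).indicator 1 a = (0:ℝ) := by
  apply Set.indicator_of_notMem
  rintro ⟨h1, h2⟩
  rcases h with h | h <;> linarith

lemma pascal_sum (n : ℕ) (A : ℕ → ℝ) :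
    ∑ j ∈ Finset.range (n+3), ((n+2).choose j : ℝ) * A j =
      ∑ i ∈ Finset.range (n+2), ((n+1).choose i : ℝ) * A i
      + ∑ i ∈ Finset.range (n+2), ((n+1).choose i : ℝ) * A (i+1) := by
  rw [Finset.sum_range_succ' (fun j => ((n+2).choose j : ℝ) * A j) (n+2)]
  rw [Finset.sum_range_succ' (fun j => ((n+1).choose j : ℝ) * A j) (n+1)]
  simp only [Nat.choose_succ_succ (n+1), Nat.cast_add, add_mul, Finset.sum_add_distrib,
    Nat.choose_zero_right, Nat.cast_one, one_mul]
  rw [Finset.sum_range_succ (fun j => ((n+1).choose (j+1) : ℝ) * A (j+1)) (n+1)]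
  simp only [Nat.choose_succ_self, Nat.cast_zero, zero_mul, add_zero]
  ring

theorem stmt6 (m : ℕ) (hm : 1 ≤ m) (x : ℝ) :
    cardinalBSpline m x =
      ((2 : ℝ) ^ (m - 1))⁻¹ *
        ∑ i ∈ Finset.range (m + 1), (Nat.choose m i : ℝ) * cardinalBSpline m (2 * x - i) := by
  obtain ⟨n, rfl⟩ := Nat.exists_eq_add_of_le' hm
  clear hm
  induction n generalizing x with
  | zero =>
    show (Set.Ico (0:ℝ) 1).indicator 1 x = _
    norm_num [Finset.sum_range_succ]
    show _ = (Set.Ico (0:ℝ) 1).indicator 1 (2*x) + (Set.Ico (0:ℝ) 1).indicator 1 (2*x - 1)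
    rcases lt_or_ge x 0 with hx | hx
    · rw [indicator_neg (Or.inl hx), indicator_neg (Or.inl (by linarith)),
        indicator_neg (Or.inl (by linarith))]
      norm_num
    rcases lt_or_ge x (1/2) with hx2 | hx2
    · rw [indicator_pos hx (by linarith), indicator_pos (by linarith) (by linarith),
        indicator_neg (Or.inl (by linarith))]
      norm_num
    rcases lt_or_ge x 1 with hx3 | hx3
    · rw [indicator_pos hx hx3, indicator_neg (Or.inr (by linarith)),
        indicator_pos (by linarith) (by linarith)]
      norm_num
    · rw [indicator_neg (Or.inr hx3), indicator_neg (Or.inr (by linarith)),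
        indicator_neg (Or.inr (by linarith))]
      norm_num
  | succ n ih =>
    have key : ∀ i : ℕ, (∫ y in (0:ℝ)..1, cardinalBSpline (n+1) (2*(x - y) - i))
        = (1/2) * (cardinalBSpline (n+2) (2*x - i) + cardinalBSpline (n+2) (2*x - i - 1)) := by
      intro i
      have h := bspline_half (n+1) (by omega) (2*x - i)
      rw [← h]
      apply intervalIntegral.integral_congr
      intro y _
      ring_nf
    have hint : ∀ i : ℕ, IntervalIntegrable
        (fun y => (Nat.choose (n+1) i : ℝ) * cardinalBSpline (n+1) (2*(x-y) - i)) volume 0 1 := by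
      intro i
      have h1 := (bspline_integrable (n+1) (2*x - i) (2*x - i - 2)).comp_sub_left (2*x - i)
      have h2 := h1.comp_mul_left (c := 2)
      have e1 : ((2*x - (i:ℝ)) - (2*x - (i:ℝ)))/2 = (0:ℝ) := by ring
      have e2 : ((2*x - (i:ℝ)) - (2*x - (i:ℝ) - 2))/2 = (1:ℝ) := by ring
      rw [e1, e2] at h2
      have h3 : (fun y : ℝ => cardinalBSpline (n+1) (2*(x-y) - i))
          = fun y => cardinalBSpline (n+1) ((2*x - (i:ℝ)) - 2*y) := by
        funext y; ring_nf
      have h4 : IntervalIntegrable (fun y : ℝ => cardinalBSpline (n+1) (2*(x-y) - i))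
          volume 0 1 := by rw [h3]; exact h2
      exact h4.const_mul _
    show (∫ y in (0:ℝ)..1, cardinalBSpline (n+1) (x - y)) = _
    have ihfun : (fun y : ℝ => cardinalBSpline (n+1) (x - y)) = fun y =>
        ((2:ℝ)^n)⁻¹ * ∑ i ∈ Finset.range (n+2),
          (Nat.choose (n+1) i : ℝ) * cardinalBSpline (n+1) (2*(x-y) - i) := by
      funext y
      have := ih (x - y)
      simpa using this
    rw [intervalIntegral.integral_congr (fun y _ => congrFun ihfun y),
      intervalIntegral.integral_const_mul,
      intervalIntegral.integral_finset_sum (fun i _ => hint i)]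
    have step : ∀ i ∈ Finset.range (n+2),
        (∫ y in (0:ℝ)..1, (Nat.choose (n+1) i : ℝ) * cardinalBSpline (n+1) (2*(x-y) - i))
        = (Nat.choose (n+1) i : ℝ) *
          ((1/2) * (cardinalBSpline (n+2) (2*x - i) + cardinalBSpline (n+2) (2*x - (i+1:ℕ)))) := by
      intro i _
      rw [intervalIntegral.integral_const_mul, key i]
      push_cast
      ring_nf
    rw [Finset.sum_congr rfl step]
    have hps := pascal_sum n (fun j => cardinalBSpline (n+2) (2*x - j))
    simp only [Nat.add_sub_cancel]
    have hR : (∑ i ∈ Finset.range (n+1+1+1), (Nat.choose (n+1+1) i : ℝ) *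
        cardinalBSpline (n+1+1) (2*x - i))
        = ∑ i ∈ Finset.range (n+2), (Nat.choose (n+1) i : ℝ) * cardinalBSpline (n+2) (2*x - i)
        + ∑ i ∈ Finset.range (n+2), (Nat.choose (n+1) i : ℝ) * cardinalBSpline (n+2) (2*x - (i+1:ℕ)) := by
      simpa using hps
    rw [hR]
    rw [Finset.sum_congr rfl (fun i _ => by
      ring_nf : ∀ i ∈ Finset.range (n+2),
        (Nat.choose (n+1) i : ℝ) *
          ((1/2) * (cardinalBSpline (n+2) (2*x - i) + cardinalBSpline (n+2) (2*x - (i+1:ℕ))))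
        = (1/2) * ((Nat.choose (n+1) i : ℝ) * cardinalBSpline (n+2) (2*x - i)
          + (Nat.choose (n+1) i : ℝ) * cardinalBSpline (n+2) (2*x - (i+1:ℕ))))]
    rw [← Finset.mul_sum, Finset.sum_add_distrib]
    rw [pow_succ]
    ring
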